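/- Let D : ℓ¹(ℕ) → ℓ^q(ℕ) (1 < q ≤ 2) be the diagonal operator D(δ_k) = γ_k δ_k with γ_k ≤ C (log(k+1))^{−(1−1/q)}. Then the entropy numbers satisfy e_n(D) ≤ c' n^{−(1−1/q)} for all n ≥ 1, with c' depending only on C and q. -/

import Mathlib

/-- The `n`-th dyadic entropy number of a bounded operator `V : X → Y`. -/
noncomputable def entropyNumber {X Y : Type*} [NormedAddCommGroup X] [NormedSpace ℝ X]
    [NormedAddCommGroup Y] [NormedSpace ℝ Y] (n : ℕ) (V : X →L[ℝ] Y) : ℝ :=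
  sInf {ε : ℝ | 0 < ε ∧ ∃ C : Finset Y, C.card ≤ 2 ^ (n - 1) ∧
    ∀ x : X, ‖x‖ ≤ 1 → ∃ y ∈ C, ‖V x - y‖ < ε}

namespace Stmt14Aux

set_option maxHeartbeats 2000000


open Real Finset

/-! ### Counting lemmas -/

lemma sum_Icc_int_pow (r : ℝ) (n : ℕ) :
    ∑ j ∈ Finset.Icc (-(n:ℤ)) (n:ℤ), r ^ j.natAbs
      = 1 + 2 * ∑ i ∈ Finset.Icc 1 n, r ^ i := by
  induction n with
  | zero => simp
  | succ n ih =>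
      have hins : Finset.Icc (-((n:ℤ)+1)) ((n:ℤ)+1)
          = insert (-((n:ℤ)+1)) (insert ((n:ℤ)+1) (Finset.Icc (-(n:ℤ)) (n:ℤ))) := by
        ext j
        simp only [Finset.mem_Icc, Finset.mem_insert]
        omega
      have h1 : (-((n:ℤ)+1)) ∉ insert ((n:ℤ)+1) (Finset.Icc (-(n:ℤ)) (n:ℤ)) := by
        simp only [Finset.mem_Icc, Finset.mem_insert]
        omega
      have h2 : ((n:ℤ)+1) ∉ Finset.Icc (-(n:ℤ)) (n:ℤ) := by
        simp only [Finset.mem_Icc]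
        omega
      have hnatAbs1 : (-((n:ℤ)+1)).natAbs = n + 1 := by omega
      have hnatAbs2 : ((n:ℤ)+1).natAbs = n + 1 := by omega
      push_cast
      rw [hins, Finset.sum_insert h1, Finset.sum_insert h2, hnatAbs1, hnatAbs2, ih,
        Finset.sum_Icc_succ_top (by omega : 1 ≤ n + 1)]
      ring

lemma sum_Icc_pow_le (r : ℝ) (h0 : 0 ≤ r) (h8 : r ≤ 1/8) (n : ℕ) :
    ∑ i ∈ Finset.Icc 1 n, r ^ i ≤ (8/7) * r := by
  have hr1 : r < 1 := by linarith
  have hgeom : ∑ i ∈ Finset.range n, r ^ i ≤ 8/7 := by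
    have hmul : (∑ i ∈ Finset.range n, r ^ i) * (r - 1) = r ^ n - 1 := geom_sum_mul r n
    have hpow : (0:ℝ) ≤ r ^ n := pow_nonneg h0 n
    have hsnn : (0:ℝ) ≤ ∑ i ∈ Finset.range n, r ^ i :=
      Finset.sum_nonneg fun i _ => pow_nonneg h0 i
    nlinarith
  have heq : ∑ i ∈ Finset.Icc 1 n, r ^ i = r * ∑ i ∈ Finset.range n, r ^ i := by
    rw [← Finset.Ico_add_one_right_eq_Icc, Finset.sum_Ico_eq_sum_range, Finset.mul_sum]
    show ∑ i ∈ Finset.range (n+1-1), r ^ (1+i) = _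
    apply Finset.sum_congr (by simp)
    intro i _
    rw [pow_add, pow_one]
  rw [heq]
  calc r * ∑ i ∈ Finset.range n, r ^ i ≤ r * (8/7) :=
        mul_le_mul_of_nonneg_left hgeom h0
    _ = (8/7) * r := by ring

lemma inner_sum_le (r : ℝ) (h0 : 0 ≤ r) (h8 : r ≤ 1/8) (n : ℕ) :
    ∑ j ∈ Finset.Icc (-(n:ℤ)) (n:ℤ), r ^ j.natAbs ≤ Real.exp (3 * r) := by
  rw [sum_Icc_int_pow]
  have h1 := sum_Icc_pow_le r h0 h8 n
  have h2 : (1:ℝ) + 3*r ≤ Real.exp (3*r) := by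
    have := Real.add_one_le_exp (3*r)
    linarith
  linarith

lemma log_two_le_logk (k : ℕ) : Real.log 2 ≤ Real.log ((k:ℝ) + 2) := by
  apply Real.log_le_log (by norm_num)
  have : (0:ℝ) ≤ (k:ℝ) := Nat.cast_nonneg k
  linarith

lemma logk_pos (k : ℕ) : 0 < Real.log ((k:ℝ) + 2) :=
  lt_of_lt_of_le (Real.log_pos (by norm_num)) (log_two_le_logk k)

lemma exp_neg_three_mul (x : ℝ) : Real.exp (-(3*x)) = Real.exp (-x) ^ (3:ℕ) := by
  rw [← Real.exp_nat_mul]; norm_num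

lemma exp_le_eighth {x : ℝ} (hx : Real.log 2 ≤ x) : Real.exp (-(3*x)) ≤ 1/8 := by
  have h1 : Real.exp (-(3 * Real.log 2)) = 1/8 := by
    have h8 : (3:ℝ) * Real.log 2 = Real.log 8 := by
      rw [show (8:ℝ) = 2 ^ (3:ℕ) by norm_num, Real.log_pow]
      push_cast; ring
    rw [h8, Real.exp_neg, Real.exp_log (by norm_num)]
    norm_num
  calc Real.exp (-(3*x)) ≤ Real.exp (-(3 * Real.log 2)) := by
        apply Real.exp_le_exp.2; linarith
    _ = 1/8 := h1

lemma exp_tel (k : ℕ) :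
    Real.exp (-(3 * Real.log ((k:ℝ) + 2))) ≤ 1/((k:ℝ)+2) - 1/((k:ℝ)+3) := by
  have hk0 : (0:ℝ) ≤ (k:ℝ) := Nat.cast_nonneg k
  have h2 : (0:ℝ) < (k:ℝ)+2 := by linarith
  have h3 : (0:ℝ) < (k:ℝ)+3 := by linarith
  rw [exp_neg_three_mul, Real.exp_neg, Real.exp_log h2]
  rw [div_sub_div _ _ h2.ne' h3.ne', inv_pow, inv_le_iff_one_le_mul₀ (by positivity),
    div_mul_eq_mul_div, le_div_iff₀ (by positivity)]
  ring_nf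
  nlinarith [sq_nonneg ((k:ℝ)), hk0, sq_nonneg ((k:ℝ)+1)]

lemma sum_exp_tel (K : ℕ) :
    ∑ k ∈ Finset.range K, Real.exp (-(3 * Real.log ((k:ℝ) + 2))) ≤ 1/2 := by
  calc ∑ k ∈ Finset.range K, Real.exp (-(3 * Real.log ((k:ℝ) + 2)))
      ≤ ∑ k ∈ Finset.range K, (1/((k:ℝ)+2) - 1/((k:ℝ)+3)) :=
        Finset.sum_le_sum fun k _ => exp_tel k
    _ = 1/((0:ℕ)+2:ℝ) - 1/((K:ℝ)+2) := by
        have h := Finset.sum_range_sub' (f := fun k : ℕ => 1/((k:ℝ)+2)) K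
        rw [← h]
        refine Finset.sum_congr rfl fun k _ => ?_
        push_cast; ring_nf
    _ ≤ 1/2 := by
        have : (0:ℝ) ≤ 1/((K:ℝ)+2) := by positivity
        norm_num
        linarith

open Classical in
lemma count_card_le (n K : ℕ) (hn : 6 ≤ n) :
    ((Finset.filter
        (fun t : Fin K → ℤ =>
          ∑ k : Fin K, ((t k).natAbs : ℝ) * Real.log (((k : ℕ) : ℝ) + 2) ≤ (n:ℝ)/10)
        (Fintype.piFinset fun _ : Fin K => Finset.Icc (-(n:ℤ)) (n:ℤ))).card : ℝ)
      ≤ (2:ℝ) ^ (n - 1 : ℕ) := by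
  set S := Finset.filter
        (fun t : Fin K → ℤ =>
          ∑ k : Fin K, ((t k).natAbs : ℝ) * Real.log (((k : ℕ) : ℝ) + 2) ≤ (n:ℝ)/10)
        (Fintype.piFinset fun _ : Fin K => Finset.Icc (-(n:ℤ)) (n:ℤ)) with hSdef
  have key1 : ∀ t ∈ S, (1:ℝ) ≤ Real.exp (3 * ((n:ℝ)/10)) *
      ∏ k : Fin K, Real.exp (-(3 * Real.log (((k:ℕ):ℝ) + 2))) ^ (t k).natAbs := by
    intro t ht
    have hcond : ∑ k : Fin K, ((t k).natAbs : ℝ) * Real.log (((k:ℕ):ℝ) + 2) ≤ (n:ℝ)/10 :=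
      (Finset.mem_filter.1 ht).2
    have hprod : ∏ k : Fin K, Real.exp (-(3 * Real.log (((k:ℕ):ℝ) + 2))) ^ (t k).natAbs
        = Real.exp (∑ k : Fin K, ((t k).natAbs : ℝ) * (-(3 * Real.log (((k:ℕ):ℝ) + 2)))) := by
      rw [Real.exp_sum]
      refine Finset.prod_congr rfl fun k _ => ?_
      rw [← Real.exp_nat_mul]
    rw [hprod, ← Real.exp_add]
    rw [show (1:ℝ) = Real.exp 0 by simp]
    apply Real.exp_le_exp.2
    have heq : ∑ k : Fin K, ((t k).natAbs : ℝ) * (-(3 * Real.log (((k:ℕ):ℝ) + 2)))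
        = -(3 * ∑ k : Fin K, ((t k).natAbs : ℝ) * Real.log (((k:ℕ):ℝ) + 2)) := by
      rw [Finset.mul_sum, ← Finset.sum_neg_distrib]
      refine Finset.sum_congr rfl fun k _ => by ring
    rw [heq]
    linarith
  have hcard : (S.card : ℝ) = ∑ _t ∈ S, (1:ℝ) := by
    rw [Finset.card_eq_sum_ones]; push_cast; ring
  have step2 : (S.card : ℝ)
      ≤ Real.exp (3 * ((n:ℝ)/10)) * ∑ t ∈ S,
        ∏ k : Fin K, Real.exp (-(3 * Real.log (((k:ℕ):ℝ) + 2))) ^ (t k).natAbs := by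
    rw [hcard, Finset.mul_sum]
    exact Finset.sum_le_sum key1
  have step3 : ∑ t ∈ S, ∏ k : Fin K, Real.exp (-(3 * Real.log (((k:ℕ):ℝ) + 2))) ^ (t k).natAbs
      ≤ ∏ k : Fin K, ∑ j ∈ Finset.Icc (-(n:ℤ)) (n:ℤ),
          Real.exp (-(3 * Real.log (((k:ℕ):ℝ) + 2))) ^ j.natAbs := by
    rw [Finset.prod_univ_sum]
    apply Finset.sum_le_sum_of_subset_of_nonneg (Finset.filter_subset _ _)
    intro t _ _
    exact Finset.prod_nonneg fun k _ => pow_nonneg (Real.exp_pos _).le _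
  have step4 : ∏ k : Fin K, ∑ j ∈ Finset.Icc (-(n:ℤ)) (n:ℤ),
        Real.exp (-(3 * Real.log (((k:ℕ):ℝ) + 2))) ^ j.natAbs
      ≤ Real.exp (3/2) := by
    calc ∏ k : Fin K, ∑ j ∈ Finset.Icc (-(n:ℤ)) (n:ℤ),
          Real.exp (-(3 * Real.log (((k:ℕ):ℝ) + 2))) ^ j.natAbs
        ≤ ∏ k : Fin K, Real.exp (3 * Real.exp (-(3 * Real.log (((k:ℕ):ℝ) + 2)))) := by
          apply Finset.prod_le_prod
          · intro k _
            exact Finset.sum_nonneg fun j _ => pow_nonneg (Real.exp_pos _).le _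
          · intro k _
            exact inner_sum_le _ (Real.exp_pos _).le (exp_le_eighth (log_two_le_logk _)) n
      _ = Real.exp (∑ k : Fin K, 3 * Real.exp (-(3 * Real.log (((k:ℕ):ℝ) + 2)))) :=
          (Real.exp_sum _ _).symm
      _ ≤ Real.exp (3/2) := by
          apply Real.exp_le_exp.2
          have hsum : ∑ k : Fin K, Real.exp (-(3 * Real.log (((k:ℕ):ℝ) + 2))) ≤ 1/2 := by
            rw [Fin.sum_univ_eq_sum_range (fun k => Real.exp (-(3 * Real.log ((k:ℝ) + 2)))) K]
            exact sum_exp_tel K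
          rw [← Finset.mul_sum]
          linarith
  have hn6 : (6:ℝ) ≤ (n:ℝ) := by exact_mod_cast hn
  have hlog2 : (0.6931471803:ℝ) < Real.log 2 := Real.log_two_gt_d9
  have hcast : ((n - 1 : ℕ) : ℝ) = (n:ℝ) - 1 := by
    have h1 : 1 ≤ n := by omega
    push_cast [h1]; ring
  have hfinal : Real.exp (3 * ((n:ℝ)/10)) * Real.exp (3/2) ≤ (2:ℝ) ^ (n - 1 : ℕ) := by
    rw [← Real.exp_add]
    have h2 : (2:ℝ) ^ (n - 1 : ℕ) = Real.exp (((n - 1 : ℕ):ℝ) * Real.log 2) := by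
      rw [Real.exp_nat_mul, Real.exp_log (by norm_num)]
    rw [h2]
    apply Real.exp_le_exp.2
    rw [hcast]
    nlinarith
  calc (S.card : ℝ)
      ≤ Real.exp (3 * ((n:ℝ)/10)) * ∑ t ∈ S,
          ∏ k : Fin K, Real.exp (-(3 * Real.log (((k:ℕ):ℝ) + 2))) ^ (t k).natAbs := step2
    _ ≤ Real.exp (3 * ((n:ℝ)/10)) * Real.exp (3/2) := by
        apply mul_le_mul_of_nonneg_left _ (Real.exp_pos _).le
        exact le_trans step3 step4
    _ ≤ (2:ℝ) ^ (n - 1 : ℕ) := hfinal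

/-! ### Rounding lemmas -/

noncomputable def rnd (η y : ℝ) : ℤ :=
  if y < 0 then -(⌊|y| / η⌋₊ : ℤ) else (⌊|y| / η⌋₊ : ℤ)

lemma rnd_natAbs (η y : ℝ) : (rnd η y).natAbs = ⌊|y| / η⌋₊ := by
  unfold rnd; split <;> simp

lemma floor_mul_le {b η : ℝ} (hη : 0 < η) (hb : 0 ≤ b) :
    (⌊b / η⌋₊ : ℝ) * η ≤ b := by
  have h1 : (⌊b / η⌋₊ : ℝ) ≤ b / η := Nat.floor_le (by positivity)
  calc (⌊b / η⌋₊ : ℝ) * η ≤ (b / η) * η := mul_le_mul_of_nonneg_right h1 hη.le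
    _ = b := by field_simp

lemma lt_floor_succ_mul {b η : ℝ} (hη : 0 < η) :
    b < ((⌊b / η⌋₊ : ℝ) + 1) * η := by
  have h1 : b / η < (⌊b / η⌋₊ : ℝ) + 1 := Nat.lt_floor_add_one _
  calc b = (b / η) * η := by field_simp
    _ < ((⌊b / η⌋₊ : ℝ) + 1) * η := by
        apply mul_lt_mul_of_pos_right h1 hη

lemma rnd_mul_le (η y : ℝ) (hη : 0 < η) : ((rnd η y).natAbs : ℝ) * η ≤ |y| := by
  rw [rnd_natAbs]
  exact floor_mul_le hη (abs_nonneg y)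

lemma rnd_err (η y : ℝ) (hη : 0 < η) :
    |y - (rnd η y : ℝ) * η| ≤ |y| ∧ |y - (rnd η y : ℝ) * η| ≤ η := by
  set m : ℝ := (⌊|y| / η⌋₊ : ℝ) with hmdef
  have hfl : m * η ≤ |y| := floor_mul_le hη (abs_nonneg y)
  have hfl2 : |y| < (m + 1) * η := lt_floor_succ_mul hη
  have hm0 : (0:ℝ) ≤ m * η := by positivity
  by_cases hy : y < 0
  · have habs : |y| = -y := abs_of_neg hy
    have hval : ((rnd η y : ℤ) : ℝ) = -m := by
      unfold rnd; rw [if_pos hy]; rw [hmdef]; push_cast; ring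
    rw [hval]
    have h1 : y - (-m) * η = -(|y| - m * η) := by
      rw [habs]; ring
    rw [h1, abs_neg]
    have h2 : |(|y| - m * η)| = |y| - m * η :=
      abs_of_nonneg (by linarith)
    rw [h2]
    constructor
    · linarith
    · nlinarith
  · have habs : |y| = y := abs_of_nonneg (by push_neg at hy; exact hy)
    have hval : ((rnd η y : ℤ) : ℝ) = m := by
      unfold rnd; rw [if_neg hy]; rw [hmdef]; push_cast; ring
    rw [hval]
    have hge : 0 ≤ y - m * η := by rw [habs] at hfl; linarith
    have h2 : |y - m * η| = y - m * η := abs_of_nonneg hge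
    rw [h2]
    constructor
    · rw [habs]; linarith
    · rw [habs] at hfl2; linarith

/-! ### entropy number upper bound from a covering -/

lemma entropyNumber_le_of_cover {X Y : Type*} [NormedAddCommGroup X] [NormedSpace ℝ X]
    [NormedAddCommGroup Y] [NormedSpace ℝ Y] (n : ℕ) (V : X →L[ℝ] Y) {ε : ℝ} (hε : 0 < ε)
    (h : ∃ Cz : Finset Y, Cz.card ≤ 2 ^ (n - 1) ∧
      ∀ x : X, ‖x‖ ≤ 1 → ∃ y ∈ Cz, ‖V x - y‖ < ε) :
    entropyNumber n V ≤ ε :=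
  csInf_le ⟨0, fun _ hb => hb.1.le⟩ ⟨hε, h⟩


open Classical in
lemma count_card_le' (n K : ℕ) (hn : 6 ≤ n) (S : Finset (Fin K → ℤ))
    (hS : ∀ t ∈ S, (∀ k : Fin K, t k ∈ Finset.Icc (-(n:ℤ)) (n:ℤ)) ∧
      ∑ k : Fin K, ((t k).natAbs : ℝ) * Real.log (((k : ℕ) : ℝ) + 2) ≤ (n:ℝ)/10) :
    (S.card : ℝ) ≤ (2:ℝ) ^ (n - 1 : ℕ) := by
  have hsub : S ⊆ Finset.filter
      (fun t : Fin K → ℤ =>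
        ∑ k : Fin K, ((t k).natAbs : ℝ) * Real.log (((k : ℕ) : ℝ) + 2) ≤ (n:ℝ)/10)
      (Fintype.piFinset fun _ : Fin K => Finset.Icc (-(n:ℤ)) (n:ℤ)) := by
    intro t ht
    exact Finset.mem_filter.2 ⟨Fintype.mem_piFinset.2 (hS t ht).1, (hS t ht).2⟩
  calc (S.card : ℝ) ≤ ((Finset.filter
      (fun t : Fin K → ℤ =>
        ∑ k : Fin K, ((t k).natAbs : ℝ) * Real.log (((k : ℕ) : ℝ) + 2) ≤ (n:ℝ)/10)
      (Fintype.piFinset fun _ : Fin K => Finset.Icc (-(n:ℤ)) (n:ℤ))).card : ℝ) := by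
        exact_mod_cast Finset.card_le_card hsub
    _ ≤ (2:ℝ) ^ (n - 1 : ℕ) := count_card_le n K hn

theorem key (q : ℝ) (hq1 : 1 < q) (hq2 : q ≤ 2) (C : ℝ) (hC : 0 < C)
    [Fact (1 ≤ ENNReal.ofReal q)]
    (γ : ℕ → ℝ) (hγ0 : ∀ k, 0 ≤ γ k)
    (hγ : ∀ k : ℕ, γ k ≤ C * Real.log ((k : ℝ) + 2) ^ (-(1 - 1 / q)))
    (D : lp (fun _ : ℕ => ℝ) 1 →L[ℝ] lp (fun _ : ℕ => ℝ) (ENNReal.ofReal q))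
    (hD : ∀ (f : lp (fun _ : ℕ => ℝ) 1) (k : ℕ),
      (D f : ∀ _ : ℕ, ℝ) k = γ k * (f : ∀ _ : ℕ, ℝ) k)
    (n : ℕ) (hn : 1 ≤ n) :
    entropyNumber n D ≤ (13 * C) * (n : ℝ) ^ (-(1 - 1 / q)) := by
  classical
  have hq0 : (0:ℝ) < q := lt_trans one_pos hq1
  have hA0 : (0:ℝ) < 1 - 1/q := by
    have : 1/q < 1 := by rw [div_lt_one hq0]; exact hq1
    linarith
  have hA2 : 1 - 1/q ≤ 1/2 := by
    have h := one_div_le_one_div_of_le hq0 hq2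
    linarith
  have hp : (ENNReal.ofReal q).toReal = q := ENNReal.toReal_ofReal hq0.le
  have hpt : 0 < (ENNReal.ofReal q).toReal := by rw [hp]; exact hq0
  have hnR : (0:ℝ) < (n:ℝ) := by exact_mod_cast hn
  have hnA : 0 < (n:ℝ) ^ (-(1-1/q)) := Real.rpow_pos_of_pos hnR _
  have hε : 0 < (13 * C) * (n:ℝ) ^ (-(1-1/q)) := by positivity
  -- facts about elements of ℓ¹
  have xfacts : ∀ x : lp (fun _ : ℕ => ℝ) 1, ‖x‖ ≤ 1 →
      Summable (fun k => ‖(x : ∀ _ : ℕ, ℝ) k‖) ∧ (∑' k, ‖(x : ∀ _ : ℕ, ℝ) k‖) ≤ 1 := by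
    intro x hx
    have hs : Summable (fun k => ‖(x : ∀ _ : ℕ, ℝ) k‖) := by
      have h := (lp.memℓp x).summable (p := 1) (by norm_num)
      simpa using h
    refine ⟨hs, ?_⟩
    have hnorm : ‖x‖ = ∑' k, ‖(x : ∀ _ : ℕ, ℝ) k‖ := by
      rw [lp.norm_eq_tsum_rpow (by norm_num) x]
      simp
    rw [hnorm] at hx
    exact hx
  -- norm bound from coordinatewise bound
  have normle : ∀ (w : lp (fun _ : ℕ => ℝ) (ENNReal.ofReal q)) (g : ℕ → ℝ) (B : ℝ),
      Summable g → (∀ k, ‖(w : ∀ _ : ℕ, ℝ) k‖ ^ q ≤ g k) → (∑' k, g k) ≤ B →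
      ‖w‖ ≤ B ^ (1/q) := by
    intro w g B hg hwg hB
    rw [lp.norm_eq_tsum_rpow hpt w, hp]
    apply Real.rpow_le_rpow
      (tsum_nonneg fun k => Real.rpow_nonneg (norm_nonneg _) q) ?_ (by positivity)
    have hsw : Summable fun k => ‖(w : ∀ _ : ℕ, ℝ) k‖ ^ q := by
      have h := (lp.memℓp w).summable hpt
      simpa only [hp] using h
    exact le_trans (Summable.tsum_le_tsum hwg hsw hg) hB
  -- coordinatewise bound for |γ k * x k|
  have hyb : ∀ (x : lp (fun _ : ℕ => ℝ) 1) (k : ℕ),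
      |γ k * (x : ∀ _ : ℕ, ℝ) k| ≤ C * Real.log ((k:ℝ)+2) ^ (-(1-1/q)) * ‖(x : ∀ _:ℕ, ℝ) k‖ := by
    intro x k
    rw [abs_mul, abs_of_nonneg (hγ0 k)]
    exact mul_le_mul_of_nonneg_right (hγ k) (abs_nonneg _)
  rcases lt_or_ge n 6 with h6 | h6
  · -- trivial case : n ≤ 5, cover by the single ball centred at 0
    have hn5 : (n:ℝ) ≤ 5 := by exact_mod_cast Nat.lt_succ_iff.1 h6
    apply entropyNumber_le_of_cover n D hε
    refine ⟨{0}, by simpa using Nat.one_le_two_pow, ?_⟩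
    intro x hx
    obtain ⟨hs, ht⟩ := xfacts x hx
    refine ⟨0, Finset.mem_singleton_self 0, ?_⟩
    rw [sub_zero]
    have hlog2pos : (0:ℝ) < Real.log 2 := Real.log_pos (by norm_num)
    set M : ℝ := C * Real.log 2 ^ (-(1-1/q)) with hMdef
    have hM0 : 0 < M := by
      have := Real.rpow_pos_of_pos hlog2pos (-(1-1/q))
      positivity
    have hxk1 : ∀ k, ‖(x : ∀ _ : ℕ, ℝ) k‖ ≤ 1 := by
      intro k
      exact le_trans (Summable.le_tsum hs k fun j _ => norm_nonneg _) ht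
    have hDxM : ‖D x‖ ≤ M := by
      have h1 : ‖D x‖ ≤ (M ^ q) ^ (1/q) := by
        apply normle (D x) (fun k => M ^ q * ‖(x : ∀ _ : ℕ, ℝ) k‖) (M ^ q)
        · exact Summable.mul_left _ hs
        · intro k
          have hcoord : ‖(D x : ∀ _ : ℕ, ℝ) k‖ = |γ k * (x : ∀ _ : ℕ, ℝ) k| := by
            rw [hD x k]; rfl
          have hlk : Real.log ((k:ℝ)+2) ^ (-(1-1/q)) ≤ Real.log 2 ^ (-(1-1/q)) :=
            Real.rpow_le_rpow_of_nonpos hlog2pos (log_two_le_logk k) (by linarith)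
          have hb : ‖(D x : ∀ _ : ℕ, ℝ) k‖ ≤ M * ‖(x : ∀ _ : ℕ, ℝ) k‖ := by
            rw [hcoord]
            calc |γ k * (x : ∀ _ : ℕ, ℝ) k|
                ≤ C * Real.log ((k:ℝ)+2) ^ (-(1-1/q)) * ‖(x : ∀ _:ℕ, ℝ) k‖ := hyb x k
              _ ≤ M * ‖(x : ∀ _ : ℕ, ℝ) k‖ := by
                  apply mul_le_mul_of_nonneg_right _ (norm_nonneg _)
                  exact mul_le_mul_of_nonneg_left hlk hC.le
          calc ‖(D x : ∀ _ : ℕ, ℝ) k‖ ^ q ≤ (M * ‖(x : ∀ _ : ℕ, ℝ) k‖) ^ q :=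
                Real.rpow_le_rpow (norm_nonneg _) hb hq0.le
            _ = M ^ q * ‖(x : ∀ _ : ℕ, ℝ) k‖ ^ q :=
                Real.mul_rpow hM0.le (norm_nonneg _)
            _ ≤ M ^ q * ‖(x : ∀ _ : ℕ, ℝ) k‖ := by
                apply mul_le_mul_of_nonneg_left _ (Real.rpow_nonneg hM0.le q)
                rcases eq_or_lt_of_le (norm_nonneg ((x : ∀ _ : ℕ, ℝ) k)) with h0 | h0
                · rw [← h0, Real.zero_rpow hq0.ne']
                · calc ‖(x : ∀ _ : ℕ, ℝ) k‖ ^ q ≤ ‖(x : ∀ _ : ℕ, ℝ) k‖ ^ (1:ℝ) :=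
                      Real.rpow_le_rpow_of_exponent_ge h0 (hxk1 k) hq1.le
                    _ = ‖(x : ∀ _ : ℕ, ℝ) k‖ := Real.rpow_one _
        · rw [tsum_mul_left]
          calc M ^ q * ∑' k, ‖(x : ∀ _ : ℕ, ℝ) k‖ ≤ M ^ q * 1 := by
                apply mul_le_mul_of_nonneg_left ht (Real.rpow_nonneg hM0.le q)
            _ = M ^ q := mul_one _
      have h2 : (M ^ q) ^ (1/q) = M := by
        rw [← Real.rpow_mul hM0.le, mul_one_div, div_self hq0.ne', Real.rpow_one]
      rwa [h2] at h1
    -- arithmetic : M < 13 C n^{-(1-1/q)}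
    have harith : M < (13 * C) * (n:ℝ) ^ (-(1-1/q)) := by
      have hlog2lt : Real.log 2 < 1 := by
        have := Real.log_two_lt_d9; linarith
      have L1 : Real.log 2 ^ (-(1 - 1/q)) ≤ Real.log 2 ^ (-(1/2 : ℝ)) :=
        Real.rpow_le_rpow_of_exponent_ge hlog2pos hlog2lt.le (by linarith)
      have L2 : Real.log 2 ^ (-(1/2 : ℝ)) ≤ 1.25 := by
        have h : Real.log 2 ^ (-(1/2 : ℝ)) = (Real.sqrt (Real.log 2))⁻¹ := by
          rw [Real.rpow_neg hlog2pos.le, Real.sqrt_eq_rpow]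
        rw [h]
        have hsq : (0.8:ℝ) ≤ Real.sqrt (Real.log 2) := by
          rw [Real.le_sqrt (by norm_num) hlog2pos.le]
          have := Real.log_two_gt_d9
          nlinarith
        calc (Real.sqrt (Real.log 2))⁻¹ ≤ (0.8:ℝ)⁻¹ := inv_anti₀ (by norm_num) hsq
          _ ≤ 1.25 := by norm_num
      have L3 : (5:ℝ) ^ (-(1/2:ℝ)) ≤ (n:ℝ) ^ (-(1 - 1/q)) := by
        calc (5:ℝ) ^ (-(1/2:ℝ)) ≤ (5:ℝ) ^ (-(1 - 1/q)) :=
              Real.rpow_le_rpow_of_exponent_le (by norm_num) (by linarith)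
          _ ≤ (n:ℝ) ^ (-(1 - 1/q)) :=
              Real.rpow_le_rpow_of_nonpos hnR hn5 (by linarith)
      have L4 : (1/3 : ℝ) ≤ (5:ℝ) ^ (-(1/2:ℝ)) := by
        have h : (5:ℝ) ^ (-(1/2 : ℝ)) = (Real.sqrt 5)⁻¹ := by
          rw [Real.rpow_neg (by norm_num), Real.sqrt_eq_rpow]
        rw [h]
        have hs5 : Real.sqrt 5 ≤ 3 := by
          have h9 : Real.sqrt 9 = 3 := by
            rw [show (9:ℝ) = 3^2 by norm_num, Real.sqrt_sq (by norm_num)]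
          calc Real.sqrt 5 ≤ Real.sqrt 9 := Real.sqrt_le_sqrt (by norm_num)
            _ = 3 := h9
        have hspos : 0 < Real.sqrt 5 := Real.sqrt_pos.2 (by norm_num)
        rw [le_inv_comm₀ (by norm_num) hspos]
        linarith
      have hM : M ≤ C * 1.25 := by
        rw [hMdef]
        exact mul_le_mul_of_nonneg_left (le_trans L1 L2) hC.le
      have hRHS : (13 * C) * (1/3 : ℝ) ≤ (13 * C) * (n:ℝ) ^ (-(1-1/q)) :=
        mul_le_mul_of_nonneg_left (le_trans L4 L3) (by positivity)
      nlinarith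
    linarith
  · -- main case : n ≥ 6
    set K : ℕ := 2 ^ n with hKdef
    set η : ℕ → ℝ := fun k => 10 * C * Real.log ((k:ℝ)+2) ^ (1/q) / (n:ℝ) with hηdef
    have hηpos : ∀ k, 0 < η k := by
      intro k
      have h := Real.rpow_pos_of_pos (logk_pos k) (1/q)
      rw [hηdef]
      positivity
    have hexp1 : ∀ k : ℕ, Real.log ((k:ℝ)+2) ^ (1/q) * Real.log ((k:ℝ)+2) ^ (1-1/q)
        = Real.log ((k:ℝ)+2) := by
      intro k
      rw [← Real.rpow_add (logk_pos k)]
      norm_num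
    have hexp2 : ∀ k : ℕ, Real.log ((k:ℝ)+2) ^ (-(1-1/q)) * Real.log ((k:ℝ)+2) ^ (1-1/q)
        = 1 := by
      intro k
      rw [← Real.rpow_add (logk_pos k)]
      simp
    -- tail estimate : for k ≥ K the weight is below the grid width
    have hL10 : ∀ k : ℕ, K ≤ k → (n:ℝ) ≤ 10 * Real.log ((k:ℝ)+2) := by
      intro k hk
      have h1 : ((2:ℝ)) ^ n ≤ (k:ℝ) + 2 := by
        have : ((K:ℕ):ℝ) ≤ (k:ℝ) := by exact_mod_cast hk
        rw [hKdef] at this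
        push_cast at this
        linarith
      have h2 : Real.log ((2:ℝ) ^ n) ≤ Real.log ((k:ℝ)+2) :=
        Real.log_le_log (by positivity) h1
      rw [Real.log_pow] at h2
      have h3 := Real.log_two_gt_d9
      have hn0 : (0:ℝ) ≤ (n:ℝ) := Nat.cast_nonneg n
      nlinarith
    have htail : ∀ k : ℕ, K ≤ k → C * Real.log ((k:ℝ)+2) ^ (-(1-1/q)) ≤ η k := by
      intro k hk
      set L := Real.log ((k:ℝ)+2) with hLdef
      have hL : 0 < L := logk_pos k
      have ha : 0 < L ^ (-(1-1/q)) := Real.rpow_pos_of_pos hL _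
      have hsplit : L * L ^ (-(1-1/q)) = L ^ (1/q) := by
        nth_rewrite 1 [← Real.rpow_one L]
        rw [← Real.rpow_add hL]
        congr 1
        ring
      rw [hηdef, le_div_iff₀ hnR]
      rw [← hsplit]
      have h10 := hL10 k hk
      nlinarith [mul_pos hC ha]
    -- the centres
    have hmem : ∀ v : Fin K → ℤ, Memℓp (fun k : ℕ =>
        if h : k < K then ((v ⟨k,h⟩ : ℤ) : ℝ) * η k else 0) (ENNReal.ofReal q) := by
      intro v
      apply memℓp_gen
      apply summable_of_ne_finset_zero (s := Finset.range K)
      intro k hk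
      rw [Finset.mem_range, not_lt] at hk
      rw [dif_neg (by omega)]
      rw [norm_zero, Real.zero_rpow (by rw [hp]; exact hq0.ne')]
    set zmk : (Fin K → ℤ) → lp (fun _ : ℕ => ℝ) (ENNReal.ofReal q) :=
      fun v => ⟨fun k => if h : k < K then ((v ⟨k,h⟩ : ℤ) : ℝ) * η k else 0, hmem v⟩
      with hzmkdef
    have hzmk : ∀ (v : Fin K → ℤ) (k : ℕ), ((zmk v) : ∀ _ : ℕ, ℝ) k
        = if h : k < K then ((v ⟨k,h⟩ : ℤ) : ℝ) * η k else 0 := fun v k => rfl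
    clear_value zmk
    set S : Finset (Fin K → ℤ) := Finset.filter
        (fun t : Fin K → ℤ =>
          ∑ k : Fin K, ((t k).natAbs : ℝ) * Real.log (((k : ℕ) : ℝ) + 2) ≤ (n:ℝ)/10)
        (Fintype.piFinset fun _ : Fin K => Finset.Icc (-(n:ℤ)) (n:ℤ)) with hSdef
    clear_value S
    have hScond : ∀ t ∈ S, (∀ k : Fin K, t k ∈ Finset.Icc (-(n:ℤ)) (n:ℤ)) ∧
        ∑ k : Fin K, ((t k).natAbs : ℝ) * Real.log (((k : ℕ) : ℝ) + 2) ≤ (n:ℝ)/10 := by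
      intro t ht
      rw [hSdef, Finset.mem_filter, Fintype.mem_piFinset] at ht
      exact ht
    have hscard : S.card ≤ 2 ^ (n-1) := by
      have h := count_card_le' n K h6 S hScond
      have h2 : ((2:ℕ) ^ (n-1) : ℝ) = (2:ℝ) ^ (n-1:ℕ) := by push_cast; ring
      rw [← h2] at h
      exact_mod_cast h
    apply entropyNumber_le_of_cover n D hε
    refine ⟨S.image zmk, le_trans Finset.card_image_le hscard, ?_⟩
    intro x hx
    obtain ⟨hs, ht⟩ := xfacts x hx
    have hxk1 : ∀ k, ‖(x : ∀ _ : ℕ, ℝ) k‖ ≤ 1 := fun k =>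
      le_trans (Summable.le_tsum hs k fun j _ => norm_nonneg _) ht
    set t : Fin K → ℤ :=
      fun k => rnd (η (k:ℕ)) (γ (k:ℕ) * (x : ∀ _ : ℕ, ℝ) (k:ℕ)) with htdef
    clear_value t
    -- per-coordinate estimate used for the filter condition
    have hmℓ : ∀ k : ℕ, ((rnd (η k) (γ k * (x : ∀ _ : ℕ, ℝ) k)).natAbs : ℝ)
        * Real.log ((k:ℝ)+2) ≤ (n:ℝ)/10 * ‖(x : ∀ _ : ℕ, ℝ) k‖ := by
      intro k
      set L := Real.log ((k:ℝ)+2) with hLdef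
      have hL : 0 < L := logk_pos k
      have h1 := rnd_mul_le (η k) (γ k * (x : ∀ _ : ℕ, ℝ) k) (hηpos k)
      have h2 := hyb x k
      set m : ℝ := ((rnd (η k) (γ k * (x : ∀ _ : ℕ, ℝ) k)).natAbs : ℝ) with hmdef
      have h3 : m * η k ≤ C * L ^ (-(1-1/q)) * ‖(x : ∀ _ : ℕ, ℝ) k‖ := le_trans h1 h2
      set c₁ : ℝ := L ^ (1-1/q) * ((n:ℝ)/(10*C)) with hc₁def
      have hc₁ : 0 ≤ c₁ := by
        have := Real.rpow_pos_of_pos hL (1-1/q)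
        rw [hc₁def]
        positivity
      have hfrac : 10*C/(n:ℝ) * ((n:ℝ)/(10*C)) = 1 := by
        field_simp
      have hfrac2 : C * ((n:ℝ)/(10*C)) = (n:ℝ)/10 := by
        field_simp
      have e1 : m * η k * c₁ = m * L := by
        calc m * η k * c₁
            = m * (L^(1/q) * L^(1-1/q)) * (10*C/(n:ℝ) * ((n:ℝ)/(10*C))) := by
              rw [hηdef, hc₁def]
              ring
          _ = m * L := by rw [hexp1 k, hfrac, mul_one]
      have e2 : C * L ^ (-(1-1/q)) * ‖(x : ∀ _ : ℕ, ℝ) k‖ * c₁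
          = (n:ℝ)/10 * ‖(x : ∀ _ : ℕ, ℝ) k‖ := by
        calc C * L ^ (-(1-1/q)) * ‖(x : ∀ _ : ℕ, ℝ) k‖ * c₁
            = (L ^ (-(1-1/q)) * L^(1-1/q)) * (C * ((n:ℝ)/(10*C))) * ‖(x : ∀ _ : ℕ, ℝ) k‖ := by
              rw [hc₁def]
              ring
          _ = (n:ℝ)/10 * ‖(x : ∀ _ : ℕ, ℝ) k‖ := by
              rw [hexp2 k, hfrac2, one_mul]
      calc m * L = m * η k * c₁ := e1.symm
        _ ≤ C * L ^ (-(1-1/q)) * ‖(x : ∀ _ : ℕ, ℝ) k‖ * c₁ :=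
            mul_le_mul_of_nonneg_right h3 hc₁
        _ = (n:ℝ)/10 * ‖(x : ∀ _ : ℕ, ℝ) k‖ := e2
    have htapp : ∀ k : Fin K, t k = rnd (η (k:ℕ)) (γ (k:ℕ) * (x : ∀ _ : ℕ, ℝ) (k:ℕ)) := by
      intro k; rw [htdef]
    -- t belongs to S
    have htS : t ∈ S := by
      rw [hSdef, Finset.mem_filter, Fintype.mem_piFinset]
      constructor
      · intro k
        have hb : ((t k).natAbs : ℝ) * Real.log ((((k:ℕ)):ℝ)+2)
            ≤ (n:ℝ)/10 * ‖(x : ∀ _ : ℕ, ℝ) (k:ℕ)‖ := by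
          rw [htapp k]
          exact hmℓ (k:ℕ)
        have hL2 : Real.log 2 ≤ Real.log ((((k:ℕ)):ℝ)+2) := log_two_le_logk (k:ℕ)
        have hlog2 : (0.6931471803:ℝ) < Real.log 2 := Real.log_two_gt_d9
        have hm0 : (0:ℝ) ≤ ((t k).natAbs : ℝ) := Nat.cast_nonneg _
        have hx1 : ‖(x : ∀ _ : ℕ, ℝ) (k:ℕ)‖ ≤ 1 := hxk1 (k:ℕ)
        have hx0 : (0:ℝ) ≤ ‖(x : ∀ _ : ℕ, ℝ) (k:ℕ)‖ := norm_nonneg _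
        have hmn : ((t k).natAbs : ℝ) ≤ (n:ℝ) := by
          nlinarith [mul_nonneg hm0 (by linarith :
              (0:ℝ) ≤ Real.log ((((k:ℕ)):ℝ)+2) - 0.6931471803),
            mul_le_mul_of_nonneg_left hx1 (by positivity : (0:ℝ) ≤ (n:ℝ)/10)]
        have hmnn : (t k).natAbs ≤ n := by exact_mod_cast hmn
        rw [Finset.mem_Icc]
        omega
      · calc ∑ k : Fin K, ((t k).natAbs : ℝ) * Real.log (((k : ℕ) : ℝ) + 2)
            ≤ ∑ k : Fin K, (n:ℝ)/10 * ‖(x : ∀ _ : ℕ, ℝ) (k:ℕ)‖ :=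
              Finset.sum_le_sum fun k _ => by rw [htapp k]; exact hmℓ (k:ℕ)
          _ = (n:ℝ)/10 * ∑ k ∈ Finset.range K, ‖(x : ∀ _ : ℕ, ℝ) k‖ := by
              rw [← Finset.mul_sum,
                Fin.sum_univ_eq_sum_range (fun k => ‖(x : ∀ _ : ℕ, ℝ) k‖) K]
          _ ≤ (n:ℝ)/10 * 1 := by
              apply mul_le_mul_of_nonneg_left _ (by positivity)
              exact le_trans (Summable.sum_le_tsum _ (fun _ _ => norm_nonneg _) hs) ht
          _ = (n:ℝ)/10 := mul_one _
    refine ⟨zmk t, Finset.mem_image_of_mem _ htS, ?_⟩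
    -- coordinatewise error bounds
    have hwc : ∀ k : ℕ, ‖((D x - zmk t : lp (fun _ : ℕ => ℝ) (ENNReal.ofReal q))
          : ∀ _ : ℕ, ℝ) k‖
        = |γ k * (x : ∀ _ : ℕ, ℝ) k - ((zmk t) : ∀ _ : ℕ, ℝ) k| := by
      intro k
      rw [lp.coeFn_sub, Pi.sub_apply, hD x k, Real.norm_eq_abs]
    have he : ∀ k : ℕ, ‖((D x - zmk t : lp (fun _ : ℕ => ℝ) (ENNReal.ofReal q))
          : ∀ _ : ℕ, ℝ) k‖ ≤ |γ k * (x : ∀ _ : ℕ, ℝ) k| ∧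
        ‖((D x - zmk t : lp (fun _ : ℕ => ℝ) (ENNReal.ofReal q)) : ∀ _ : ℕ, ℝ) k‖ ≤ η k := by
      intro k
      rw [hwc k]
      by_cases hk : k < K
      · have hz : ((zmk t) : ∀ _ : ℕ, ℝ) k
            = ((rnd (η k) (γ k * (x : ∀ _ : ℕ, ℝ) k) : ℤ) : ℝ) * η k := by
          rw [hzmk t k, dif_pos hk]
          rw [htdef]
        rw [hz]
        exact rnd_err (η k) (γ k * (x : ∀ _ : ℕ, ℝ) k) (hηpos k)
      · have hz : ((zmk t) : ∀ _ : ℕ, ℝ) k = 0 := by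
          rw [hzmk t k, dif_neg hk]
        rw [hz, sub_zero]
        refine ⟨le_refl _, ?_⟩
        have h1 : |γ k * (x : ∀ _ : ℕ, ℝ) k| ≤ C * Real.log ((k:ℝ)+2) ^ (-(1-1/q)) := by
          calc |γ k * (x : ∀ _ : ℕ, ℝ) k|
              ≤ C * Real.log ((k:ℝ)+2) ^ (-(1-1/q)) * ‖(x : ∀ _:ℕ, ℝ) k‖ := hyb x k
            _ ≤ C * Real.log ((k:ℝ)+2) ^ (-(1-1/q)) * 1 := by
                apply mul_le_mul_of_nonneg_left (hxk1 k)
                have := Real.rpow_pos_of_pos (logk_pos k) (-(1-1/q))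
                positivity
            _ = C * Real.log ((k:ℝ)+2) ^ (-(1-1/q)) := mul_one _
        exact le_trans h1 (htail k (not_lt.1 hk))
    -- the coordinatewise q-power bound
    set G : ℝ := (10:ℝ)^(q-1) * C^q * (n:ℝ)^((1:ℝ)-q) with hGdef
    clear_value G
    have hG0 : 0 ≤ G := by
      have g1 : (0:ℝ) < (10:ℝ)^(q-1) := Real.rpow_pos_of_pos (by norm_num) _
      have g2 : (0:ℝ) < C^q := Real.rpow_pos_of_pos hC _
      have g3 : (0:ℝ) < (n:ℝ)^((1:ℝ)-q) := Real.rpow_pos_of_pos hnR _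
      rw [hGdef]
      positivity
    have hterm : ∀ k : ℕ, ‖((D x - zmk t : lp (fun _ : ℕ => ℝ) (ENNReal.ofReal q))
          : ∀ _ : ℕ, ℝ) k‖ ^ q ≤ G * ‖(x : ∀ _ : ℕ, ℝ) k‖ := by
      intro k
      obtain ⟨he1, he2⟩ := he k
      set e : ℝ := ‖((D x - zmk t : lp (fun _ : ℕ => ℝ) (ENNReal.ofReal q))
          : ∀ _ : ℕ, ℝ) k‖ with hedef
      have he0 : (0:ℝ) ≤ e := norm_nonneg _
      clear_value e
      set L := Real.log ((k:ℝ)+2) with hLdef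
      have hL : 0 < L := logk_pos k
      rcases eq_or_lt_of_le he0 with h0 | h0
      · rw [← h0, Real.zero_rpow hq0.ne']
        positivity
      · have hq1' : (0:ℝ) ≤ q - 1 := by linarith
        have step1 : e ^ q = e ^ (q-1) * e := by
          rw [← Real.rpow_add_one h0.ne' (q-1)]
          norm_num
        have step2 : e ^ (q-1) ≤ (η k) ^ (q-1) :=
          Real.rpow_le_rpow h0.le he2 hq1'
        have step3 : e ≤ C * L ^ (-(1-1/q)) * ‖(x : ∀ _ : ℕ, ℝ) k‖ :=
          le_trans he1 (hyb x k)
        have step4 : e ^ q ≤ (η k) ^ (q-1) * (C * L ^ (-(1-1/q)) * ‖(x : ∀ _ : ℕ, ℝ) k‖) := by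
          rw [step1]
          apply mul_le_mul step2 step3 h0.le (Real.rpow_nonneg (hηpos k).le _)
        -- compute the right-hand side
        have hηr : (η k) ^ (q-1)
            = (10:ℝ)^(q-1) * C^(q-1) * L^(1-1/q) / (n:ℝ)^(q-1) := by
          rw [hηdef]
          rw [Real.div_rpow (by positivity) hnR.le,
            Real.mul_rpow (by positivity) (Real.rpow_nonneg hL.le _),
            Real.mul_rpow (by norm_num) hC.le]
          congr 1
          rw [← Real.rpow_mul hL.le]
          congr 1
          field_simp
        have hCq : C^(q-1) * C = C^q := by
          rw [← Real.rpow_add_one hC.ne' (q-1)]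
          norm_num
        have hnq : ((n:ℝ)^(q-1))⁻¹ = (n:ℝ)^((1:ℝ)-q) := by
          rw [show (1:ℝ)-q = -(q-1) by ring, Real.rpow_neg hnR.le]
        have hrhs : (η k) ^ (q-1) * (C * L ^ (-(1-1/q)) * ‖(x : ∀ _ : ℕ, ℝ) k‖)
            = G * (L^(1-1/q) * L ^ (-(1-1/q))) * ‖(x : ∀ _ : ℕ, ℝ) k‖ := by
          rw [hηr, hGdef, ← hCq, ← hnq]
          ring
        rw [hrhs, mul_comm (L^(1-1/q)) (L ^ (-(1-1/q))), hexp2 k, mul_one] at step4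
        exact step4
    -- sum up
    have hnorm : ‖D x - zmk t‖ ≤ G ^ (1/q) := by
      apply normle (D x - zmk t) (fun k => G * ‖(x : ∀ _ : ℕ, ℝ) k‖) G
        (hs.mul_left G) hterm
      rw [tsum_mul_left]
      calc G * ∑' k, ‖(x : ∀ _ : ℕ, ℝ) k‖ ≤ G * 1 := mul_le_mul_of_nonneg_left ht hG0
        _ = G := mul_one _
    -- evaluate G^(1/q)
    have hGq : G ^ (1/q) = (10:ℝ)^(1-1/q) * C * (n:ℝ)^(-(1-1/q)) := by
      rw [hGdef,
        Real.mul_rpow (by positivity) (Real.rpow_nonneg hnR.le _),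
        Real.mul_rpow (Real.rpow_nonneg (by norm_num) _) (Real.rpow_nonneg hC.le _),
        ← Real.rpow_mul (by norm_num : (0:ℝ) ≤ 10),
        ← Real.rpow_mul hC.le, ← Real.rpow_mul hnR.le]
      rw [show (q-1) * (1/q) = 1-1/q by field_simp,
        show q * (1/q) = 1 by field_simp,
        show ((1:ℝ)-q) * (1/q) = -(1-1/q) by field_simp; ring,
        Real.rpow_one]
    have h10 : (10:ℝ)^(1-1/q) ≤ 4 := by
      calc (10:ℝ)^(1-1/q) ≤ (10:ℝ)^((1:ℝ)/2) :=
            Real.rpow_le_rpow_of_exponent_le (by norm_num) (by linarith)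
        _ = Real.sqrt 10 := (Real.sqrt_eq_rpow 10).symm
        _ ≤ Real.sqrt 16 := Real.sqrt_le_sqrt (by norm_num)
        _ = 4 := by rw [show (16:ℝ) = 4^2 by norm_num, Real.sqrt_sq (by norm_num)]
    have hfin : G ^ (1/q) < (13 * C) * (n:ℝ) ^ (-(1-1/q)) := by
      rw [hGq]
      have hCn : 0 < C * (n:ℝ)^(-(1-1/q)) := by positivity
      nlinarith
    calc ‖D x - zmk t‖ ≤ G ^ (1/q) := hnorm
      _ < (13 * C) * (n:ℝ) ^ (-(1-1/q)) := hfin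

end Stmt14Aux

/-- Critical diagonal operator estimate (Kühn): a diagonal operator
`D : ℓ¹(ℕ) → ℓ^q(ℕ)` (`1 < q ≤ 2`), `D δ_k = γ_k δ_k`, with
`γ_k ≤ C (log(k+1))^{-(1-1/q)}` (sequences indexed from `1`; in Lean the `k`-th
coordinate, `k : ℕ`, carries the bound with `log(k+2)`) satisfies
`e_n(D) ≤ c' n^{-(1-1/q)}` for all `n ≥ 1`, with `c'` depending only on `C` and `q`. -/
theorem stmt_14 (q : ℝ) (hq1 : 1 < q) (hq2 : q ≤ 2) (C : ℝ) (hC : 0 < C) :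
    ∃ c' > 0,
      letI : Fact (1 ≤ ENNReal.ofReal q) :=
        ⟨by rw [ENNReal.one_le_ofReal]; exact hq1.le⟩
      ∀ γ : ℕ → ℝ, (∀ k, 0 ≤ γ k) →
        (∀ k : ℕ, γ k ≤ C * Real.log ((k : ℝ) + 2) ^ (-(1 - 1 / q))) →
        ∀ D : lp (fun _ : ℕ => ℝ) 1 →L[ℝ] lp (fun _ : ℕ => ℝ) (ENNReal.ofReal q),
          (∀ (f : lp (fun _ : ℕ => ℝ) 1) (k : ℕ), (D f : ∀ _ : ℕ, ℝ) k = γ k * (f : ∀ _ : ℕ, ℝ) k) →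
          ∀ n : ℕ, 1 ≤ n → entropyNumber n D ≤ c' * (n : ℝ) ^ (-(1 - 1 / q)) := by
  haveI : Fact (1 ≤ ENNReal.ofReal q) :=
    ⟨by rw [ENNReal.one_le_ofReal]; exact hq1.le⟩
  refine ⟨13 * C, by positivity, ?_⟩
  intro γ hγ0 hγb D hD n hn
  exact Stmt14Aux.key q hq1 hq2 C hC γ hγ0 hγb D hD n hn
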